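/- If H : Σ → ℝ is continuous with summable variation, then Mather(H) ⊆ { x ∈ Σ : h(x,x) = 0 }, where h is the Peierls barrier of H. -/

import Mathlib

open MeasureTheory Filter Topology

/-- The one-sided full shift space on two symbols. -/
abbrev Sig : Type := ℕ → Fin 2

/-- The left shift map. -/
def shft : Sig → Sig := fun x n => x (n + 1)

/-- Concatenation of a symbol with a configuration. -/
def cons2 (i : Fin 2) (x : Sig) : Sig := fun n => match n with
  | 0 => i
  | Nat.succ k => x k

/-- `x` and `y` agree on their first `n` coordinates. -/
def nClose (n : ℕ) (x y : Sig) : Prop := ∀ k, k < n → x k = y k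

/-- The `n`-th variation of `H`. -/
noncomputable def Var (H : Sig → ℝ) (n : ℕ) : ℝ :=
  sSup {d : ℝ | ∃ x y : Sig, nClose n x y ∧ d = |H x - H y|}

/-- `H` has summable variation. -/
def SummableVar (H : Sig → ℝ) : Prop := Summable (fun n : ℕ => Var H (n + 1))

/-- The transfer operator at inverse temperature `β`. -/
noncomputable def transfer (β : ℝ) (H : Sig → ℝ) (Φ : Sig → ℝ) : Sig → ℝ :=
  fun x => Real.exp (-β * H (cons2 0 x)) * Φ (cons2 0 x)
         + Real.exp (-β * H (cons2 1 x)) * Φ (cons2 1 x)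

/-- The cylinder set determined by a finite word. -/
def cyl (w : List (Fin 2)) : Set Sig := {x | ∀ i : ℕ, ∀ h : i < w.length, x i = w.get ⟨i, h⟩}

/-- The fixed point `0^∞`. -/
def zpt : Sig := fun _ => 0

/-- The fixed point `1^∞`. -/
def opt : Sig := fun _ => 1

/-- The minimizing ergodic value of `H`. -/
noncomputable def Hbar (H : Sig → ℝ) : ℝ :=
  sInf {r : ℝ | ∃ μ : Measure Sig, IsProbabilityMeasure μ ∧ μ.map shft = μ ∧ r = ∫ x, H x ∂μ}

/-- A minimizing measure for `H`. -/
def IsMinimizing (H : Sig → ℝ) (μ : Measure Sig) : Prop :=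
  IsProbabilityMeasure μ ∧ μ.map shft = μ ∧
  ∀ ν : Measure Sig, IsProbabilityMeasure ν → ν.map shft = ν →
    ∫ x, H x ∂μ ≤ ∫ x, H x ∂ν

/-- The (topological) support of a measure. -/
def mSupport (μ : Measure Sig) : Set Sig := {x | ∀ U : Set Sig, IsOpen U → x ∈ U → μ U ≠ 0}

/-- The Mather set of `H` : union of supports of minimizing measures. -/
def mather (H : Sig → ℝ) : Set Sig := {x | ∃ μ : Measure Sig, IsMinimizing H μ ∧ x ∈ mSupport μ}

/-- Birkhoff sum of the normalized potential. -/
noncomputable def birk (H : Sig → ℝ) (k : ℕ) (z : Sig) : ℝ :=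
  ∑ i ∈ Finset.range k, (H (shft^[i] z) - Hbar H)

/-- The quantity `S_n^p(x,y)` (an infimum in `EReal`, `+∞` when the defining set is empty). -/
noncomputable def SBar (H : Sig → ℝ) (p n : ℕ) (x y : Sig) : EReal :=
  sInf {s : EReal | ∃ k : ℕ, n ≤ k ∧ ∃ z : Sig, nClose p z x ∧ nClose p (shft^[k] z) y ∧
    s = (birk H k z : EReal)}

/-- The Peierls barrier `h(x,y)`; since `S_n^p(x,y)` is nondecreasing in both `n` and `p`,
the double limit is a double supremum. -/
noncomputable def peierls (H : Sig → ℝ) (x y : Sig) : EReal := ⨆ p : ℕ, ⨆ n : ℕ, SBar H p n x y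

/-- The Lax-Oleinik operator (the two preimages of `y` under the shift are `0y` and `1y`). -/
noncomputable def laxOleinik (H V : Sig → ℝ) : Sig → ℝ :=
  fun y => min (V (cons2 0 y) + H (cons2 0 y)) (V (cons2 1 y) + H (cons2 1 y))

/-- A calibrated sub-action of `H`. -/
def IsCalibrated (H V : Sig → ℝ) : Prop :=
  Continuous V ∧ laxOleinik H V = fun y => V y + Hbar H

/-- Membership in the class `𝕂`. -/
def InK (H V : Sig → ℝ) : Prop :=
  Continuous V ∧ ∀ n : ℕ, 1 ≤ n → Var V n ≤ ∑' k : ℕ, Var H (n + 1 + k)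

/-- A reduced double-well type potential with data `(H_n^0)`, `(H_n^1)` (indexed from `n = 1`). -/
structure ReducedDW (H : Sig → ℝ) (H0 H1 : ℕ → ℝ) : Prop where
  cont : Continuous H
  nonneg : ∀ x, 0 ≤ H x
  svar : SummableVar H
  zero : ∀ x ∈ cyl [0, 0] ∪ cyl [1, 1], H x = 0
  pos0 : ∀ n, 1 ≤ n → 0 < H0 n
  pos1 : ∀ n, 1 ≤ n → 0 < H1 n
  val0 : ∀ n, 1 ≤ n → ∀ x ∈ cyl (0 :: (List.replicate n 1 ++ [0])), H x = H0 n
  val1 : ∀ n, 1 ≤ n → ∀ x ∈ cyl (1 :: (List.replicate n 0 ++ [1])), H x = H1 n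
  bdd0 : ∀ k : ℕ, BddAbove (Set.range fun n : ℕ => |H0 (k + 1) - H0 (k + 1 + n)|)
  bdd1 : ∀ k : ℕ, BddAbove (Set.range fun n : ℕ => |H1 (k + 1) - H1 (k + 1 + n)|)
  sum0 : Summable (fun k : ℕ => ⨆ n : ℕ, |H0 (k + 1) - H0 (k + 1 + n)|)
  sum1 : Summable (fun k : ℕ => ⨆ n : ℕ, |H1 (k + 1) - H1 (k + 1 + n)|)

/-- A double-well type potential with data `a_n^0, a_n^1, b_n^0, b_n^1` (indexed from `n = 1`). -/
structure DW (H : Sig → ℝ) (a0 a1 b0 b1 : ℕ → ℝ) : Prop where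
  cont : Continuous H
  nonneg : ∀ x, 0 ≤ H x
  svar : SummableVar H
  anneg0 : ∀ n, 1 ≤ n → 0 ≤ a0 n
  anneg1 : ∀ n, 1 ≤ n → 0 ≤ a1 n
  bpos0 : ∀ n, 1 ≤ n → 0 < b0 n
  bpos1 : ∀ n, 1 ≤ n → 0 < b1 n
  vala0 : ∀ n, 1 ≤ n → ∀ x ∈ cyl (0 :: (List.replicate n 0 ++ [1])), H x = a0 n
  vala1 : ∀ n, 1 ≤ n → ∀ x ∈ cyl (1 :: (List.replicate n 1 ++ [0])), H x = a1 n
  valb0 : ∀ n, 1 ≤ n → ∀ x ∈ cyl (0 :: (List.replicate n 1 ++ [0])), H x = b0 n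
  valb1 : ∀ n, 1 ≤ n → ∀ x ∈ cyl (1 :: (List.replicate n 0 ++ [1])), H x = b1 n
  suma0 : Summable (fun n : ℕ => ((n + 1 : ℕ) : ℝ) * a0 (n + 1))
  suma1 : Summable (fun n : ℕ => ((n + 1 : ℕ) : ℝ) * a1 (n + 1))
  bddb0 : ∀ k : ℕ, BddAbove (Set.range fun n : ℕ => |b0 (k + 1) - b0 (k + 1 + n)|)
  bddb1 : ∀ k : ℕ, BddAbove (Set.range fun n : ℕ => |b1 (k + 1) - b1 (k + 1 + n)|)
  sumb0 : Summable (fun k : ℕ => ⨆ n : ℕ, |b0 (k + 1) - b0 (k + 1 + n)|)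
  sumb1 : Summable (fun k : ℕ => ⨆ n : ℕ, |b1 (k + 1) - b1 (k + 1 + n)|)

/-- The series `F_β(λ) = Σ_{k≥1} λ^{-k} e^{-β H_k}`. -/
noncomputable def Fser (β : ℝ) (Hs : ℕ → ℝ) (lam : ℝ) : ℝ :=
  ∑' k : ℕ, (lam ^ (k + 1))⁻¹ * Real.exp (-β * Hs (k + 1))

/-- The series `F̃_β(λ) = Σ_{k≥1} k λ^{-k} e^{-β H_k}`. -/
noncomputable def Ftser (β : ℝ) (Hs : ℕ → ℝ) (lam : ℝ) : ℝ :=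
  ∑' k : ℕ, ((k + 1 : ℕ) : ℝ) * (lam ^ (k + 1))⁻¹ * Real.exp (-β * Hs (k + 1))

/-- The data of the Ruelle-Perron-Frobenius solution and Gibbs measure at inverse temperature `β`:
eigenfunction `Φ` (positive, continuous, max 1), eigenvalue `lam`, eigenprobability `ν`,
and the Gibbs measure `μ = Φ ν / ∫ Φ dν`. -/
def GibbsData (H : Sig → ℝ) (β : ℝ) (Φ : Sig → ℝ) (lam : ℝ) (ν μ : Measure Sig) : Prop :=
  Continuous Φ ∧ (∀ x, 0 < Φ x) ∧ IsGreatest (Set.range Φ) 1 ∧ 0 < lam ∧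
  (transfer β H Φ = fun x => lam * Φ x) ∧
  IsProbabilityMeasure ν ∧
  (∀ f : Sig → ℝ, Continuous f → ∫ x, transfer β H f x ∂ν = lam * ∫ x, f x ∂ν) ∧
  μ = (ENNReal.ofReal (∫ x, Φ x ∂ν))⁻¹ • ν.withDensity (fun x => ENNReal.ofReal (Φ x))


set_option maxHeartbeats 1000000

namespace S5

lemma shft_cont : Continuous shft := continuous_pi fun n => continuous_apply (n+1)

lemma shft_meas : Measurable shft := shft_cont.measurable

lemma shft_iter_cont (i : ℕ) : Continuous (shft^[i]) := shft_cont.iterate i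

lemma shft_iter_apply (i : ℕ) (z : Sig) (j : ℕ) : shft^[i] z j = z (j + i) := by
  induction i generalizing z j with
  | zero => rfl
  | succ i ih =>
    rw [Function.iterate_succ_apply, ih]
    show z (j + i + 1) = z (j + (i+1))
    ring_nf

def cylSet (x : Sig) (p : ℕ) : Set Sig := {z | nClose p z x}

lemma isOpen_cylSet (x : Sig) (p : ℕ) : IsOpen (cylSet x p) := by
  have : cylSet x p = ⋂ k ∈ Finset.range p, {z : Sig | z k = x k} := by
    ext z; simp [cylSet, nClose, Finset.mem_range]
  rw [this]
  refine isOpen_biInter_finset fun k _ => ?_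
  have : {z : Sig | z k = x k} = (fun z : Sig => z k) ⁻¹' {x k} := rfl
  rw [this]
  exact (isOpen_discrete {x k}).preimage (continuous_apply k)

lemma measurableSet_cylSet (x : Sig) (p : ℕ) : MeasurableSet (cylSet x p) :=
  (isOpen_cylSet x p).measurableSet

lemma mem_cylSet_self (x : Sig) (p : ℕ) : x ∈ cylSet x p := fun _ _ => rfl

lemma exists_bound {f : Sig → ℝ} (hf : Continuous f) : ∃ B : ℝ, 0 ≤ B ∧ ∀ z, |f z| ≤ B := by
  obtain ⟨C, hC⟩ := isCompact_univ.exists_bound_of_continuousOn hf.continuousOn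
  exact ⟨max C 0, le_max_right _ _, fun z => le_trans (by simpa using hC z trivial) (le_max_left _ _)⟩

lemma integrable_of_continuous (μ : Measure Sig) [IsFiniteMeasure μ] {f : Sig → ℝ}
    (hf : Continuous f) : Integrable f μ := by
  obtain ⟨B, _, hB⟩ := exists_bound hf
  exact ⟨hf.aestronglyMeasurable,
    HasFiniteIntegral.of_bounded (C := B) (ae_of_all _ fun z => by simpa using hB z)⟩

lemma varSet_bddAbove {H : Sig → ℝ} (hHc : Continuous H) (m : ℕ) :
    BddAbove {d : ℝ | ∃ x y : Sig, nClose m x y ∧ d = |H x - H y|} := by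
  obtain ⟨B, _, hB⟩ := exists_bound hHc
  refine ⟨2 * B, fun d hd => ?_⟩
  obtain ⟨x, y, _, rfl⟩ := hd
  calc |H x - H y| ≤ |H x| + |H y| := abs_sub _ _
    _ ≤ B + B := add_le_add (hB x) (hB y)
    _ = 2 * B := by ring

lemma abs_sub_le_Var {H : Sig → ℝ} (hHc : Continuous H) {m : ℕ} {u v : Sig}
    (h : nClose m u v) : |H u - H v| ≤ Var H m :=
  le_csSup (varSet_bddAbove hHc m) ⟨u, v, h, rfl⟩

lemma Var_nonneg {H : Sig → ℝ} (hHc : Continuous H) (m : ℕ) : 0 ≤ Var H m :=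
  le_csSup (varSet_bddAbove hHc m) ⟨zpt, zpt, fun _ _ => rfl, by simp⟩


def MinSet (H : Sig → ℝ) : Set ℝ :=
  {r : ℝ | ∃ μ : Measure Sig, IsProbabilityMeasure μ ∧ μ.map shft = μ ∧ r = ∫ x, H x ∂μ}

lemma minSet_nonempty {H : Sig → ℝ} (hHc : Continuous H) : (MinSet H).Nonempty := by
  refine ⟨H zpt, Measure.dirac zpt, inferInstance, ?_, ?_⟩
  · rw [Measure.map_dirac' shft_meas]
    congr 1
  · rw [integral_dirac' H zpt hHc.stronglyMeasurable]

lemma minSet_bddBelow {H : Sig → ℝ} (hHc : Continuous H) : BddBelow (MinSet H) := by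
  obtain ⟨B, _, hB⟩ := exists_bound hHc
  refine ⟨-B, fun r hr => ?_⟩
  obtain ⟨μ, hp, _, rfl⟩ := hr
  haveI := hp
  calc (-B : ℝ) = ∫ _x, (-B : ℝ) ∂μ := by simp
    _ ≤ ∫ x, H x ∂μ := by
        refine integral_mono (integrable_const _) (integrable_of_continuous μ hHc) fun z => ?_
        have := hB z
        have := abs_le.1 this
        linarith [this.1]

lemma Hbar_le_of_mem {H : Sig → ℝ} (hHc : Continuous H) {r : ℝ} (hr : r ∈ MinSet H) :
    Hbar H ≤ r := csInf_le (minSet_bddBelow hHc) hr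

lemma integral_eq_Hbar {H : Sig → ℝ} (hHc : Continuous H) {μ : Measure Sig}
    (hmin : IsMinimizing H μ) : ∫ x, H x ∂μ = Hbar H := by
  refine le_antisymm ?_ (Hbar_le_of_mem hHc ⟨μ, hmin.1, hmin.2.1, rfl⟩)
  refine le_csInf (minSet_nonempty hHc) fun r hr => ?_
  obtain ⟨ν, hp, hi, rfl⟩ := hr
  exact hmin.2.2 ν hp hi

lemma map_sum_measures {ι : Type*} (s : Finset ι) (μ : ι → Measure Sig) {f : Sig → Sig}
    (hf : Measurable f) :
    Measure.map f (∑ i ∈ s, μ i) = ∑ i ∈ s, Measure.map f (μ i) := by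
  classical
  induction s using Finset.induction with
  | empty => simp
  | insert _ _ h ih => rw [Finset.sum_insert h, Finset.sum_insert h, Measure.map_add _ _ hf, ih]

lemma Hbar_le_birk_avg {H : Sig → ℝ} (hHc : Continuous H) {k : ℕ} (hk : 0 < k) {w : Sig}
    (hw : shft^[k] w = w) :
    (k : ℝ) * Hbar H ≤ ∑ i ∈ Finset.range k, H (shft^[i] w) := by
  classical
  set μ : Measure Sig := ((k : ENNReal))⁻¹ • ∑ i ∈ Finset.range k, Measure.dirac (shft^[i] w) with hμ
  have hk0 : (k : ENNReal) ≠ 0 := by exact_mod_cast hk.ne'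
  have hkt : (k : ENNReal) ≠ ⊤ := ENNReal.natCast_ne_top k
  have hprob : IsProbabilityMeasure μ := by
    constructor
    rw [hμ, Measure.smul_apply, Measure.coe_finset_sum, Finset.sum_apply]
    simp only [Measure.dirac_apply' _ MeasurableSet.univ, Set.mem_univ, Set.indicator_of_mem]
    simp only [Pi.one_apply]
    rw [Finset.sum_const, Finset.card_range, nsmul_eq_mul, mul_one, smul_eq_mul,
      ENNReal.inv_mul_cancel hk0 hkt]
  have hinv : μ.map shft = μ := by
    rw [hμ, Measure.map_smul, map_sum_measures _ _ shft_meas]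
    congr 1
    have h1 : ∀ i, Measure.map shft (Measure.dirac (shft^[i] w)) = Measure.dirac (shft^[i+1] w) := by
      intro i
      rw [Measure.map_dirac' shft_meas, ← Function.iterate_succ_apply' shft i w]
    simp only [h1]
    -- cyclic permutation
    refine Finset.sum_nbij' (fun i => (i + 1) % k) (fun j => (j + (k-1)) % k) ?_ ?_ ?_ ?_ ?_
    · intro i _; exact Finset.mem_range.2 (Nat.mod_lt _ hk)
    · intro j _; exact Finset.mem_range.2 (Nat.mod_lt _ hk)
    · intro i hi
      have hi' := Finset.mem_range.1 hi
      show ((i + 1) % k + (k - 1)) % k = i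
      rcases Nat.lt_or_ge (i+1) k with h | h
      · rw [Nat.mod_eq_of_lt h]
        rcases Nat.lt_or_ge (i + 1 + (k-1)) k with h2 | h2
        · rw [Nat.mod_eq_of_lt h2]; omega
        · rw [Nat.mod_eq_sub_mod h2, Nat.mod_eq_of_lt (by omega)]; omega
      · have : i + 1 = k := by omega
        rw [this, Nat.mod_self, Nat.zero_add, Nat.mod_eq_of_lt (by omega)]
        omega
    · intro j hj
      have hj' := Finset.mem_range.1 hj
      show ((j + (k - 1)) % k + 1) % k = j
      rcases Nat.lt_or_ge (j + (k-1)) k with h | h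
      · rw [Nat.mod_eq_of_lt h]
        have : j + (k-1) + 1 = k + j := by omega
        rw [this, Nat.add_mod_left, Nat.mod_eq_of_lt hj']
      · have h2 : j + (k-1) - k < k := by omega
        rw [Nat.mod_eq_sub_mod h, Nat.mod_eq_of_lt h2]
        have : j + (k-1) - k + 1 = j := by omega
        rw [this, Nat.mod_eq_of_lt hj']
    · intro i hi
      have hi' := Finset.mem_range.1 hi
      show Measure.dirac (shft^[i+1] w) = Measure.dirac (shft^[(i+1) % k] w)
      rcases Nat.lt_or_ge (i+1) k with h | h
      · rw [Nat.mod_eq_of_lt h]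
      · have hik : i + 1 = k := by omega
        rw [hik, Nat.mod_self, hw]
        rfl
  have hint : ∫ x, H x ∂μ = (k : ℝ)⁻¹ * ∑ i ∈ Finset.range k, H (shft^[i] w) := by
    rw [hμ, integral_smul_measure, integral_finset_sum_measure
      (fun i _ => integrable_of_continuous _ hHc)]
    simp only [integral_dirac' H _ hHc.stronglyMeasurable]
    rw [ENNReal.toReal_inv, smul_eq_mul]
    norm_num
  have hle : Hbar H ≤ ∫ x, H x ∂μ := Hbar_le_of_mem hHc ⟨μ, hprob, hinv, rfl⟩
  rw [hint] at hle
  have hkR : (0:ℝ) < k := by exact_mod_cast hk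
  calc (k:ℝ) * Hbar H ≤ (k:ℝ) * ((k : ℝ)⁻¹ * ∑ i ∈ Finset.range k, H (shft^[i] w)) :=
        mul_le_mul_of_nonneg_left hle (le_of_lt hkR)
    _ = ∑ i ∈ Finset.range k, H (shft^[i] w) := by field_simp


noncomputable def Tail (H : Sig → ℝ) (p : ℕ) : ℝ := ∑' m : ℕ, Var H (p + 1 + m)

lemma summable_tail {H : Sig → ℝ} (hHv : SummableVar H) (p : ℕ) :
    Summable (fun m : ℕ => Var H (p + 1 + m)) := by
  have h1 : Summable (fun m : ℕ => Var H ((m + p) + 1)) := (summable_nat_add_iff p).2 hHv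
  exact h1.congr fun m => by congr 1; omega

lemma Tail_nonneg {H : Sig → ℝ} (hHc : Continuous H) (p : ℕ) : 0 ≤ Tail H p :=
  tsum_nonneg fun m => Var_nonneg hHc _

lemma exists_tail_lt {H : Sig → ℝ} (hHc : Continuous H) (hHv : SummableVar H) {δ : ℝ}
    (hδ : 0 < δ) : ∃ p : ℕ, Tail H p < δ := by
  have key : ∀ p : ℕ, Tail H p = (∑' n : ℕ, Var H (n+1)) - ∑ i ∈ Finset.range p, Var H (i+1) := by
    intro p
    have h := hHv.sum_add_tsum_nat_add p
    have h2 : Tail H p = ∑' i : ℕ, Var H ((i + p) + 1) := tsum_congr fun m => by congr 1; omega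
    rw [h2]
    linarith [h]
  have htends := hHv.hasSum.tendsto_sum_nat
  have : ∀ᶠ p in atTop, (∑' n : ℕ, Var H (n+1)) - δ < ∑ i ∈ Finset.range p, Var H (i+1) := by
    apply htends.eventually
    exact eventually_gt_nhds (by linarith)
  obtain ⟨p, hp⟩ := this.exists
  exact ⟨p, by rw [key p]; linarith⟩

lemma birk_cocycle (H : Sig → ℝ) (a b : ℕ) (z : Sig) :
    birk H (a + b) z = birk H a z + birk H b (shft^[a] z) := by
  unfold birk
  rw [Finset.sum_range_add]
  congr 1
  refine Finset.sum_congr rfl fun i _ => ?_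
  rw [← Function.iterate_add_apply, Nat.add_comm i a]

lemma birk_ge_neg_tail {H : Sig → ℝ} (hHc : Continuous H) (hHv : SummableVar H)
    (x : Sig) (p : ℕ) {z : Sig} {k : ℕ} (hz : nClose p z x) (hz' : nClose p (shft^[k] z) x) :
    -(Tail H p) ≤ birk H k z := by
  rcases Nat.eq_zero_or_pos k with rfl | hk
  · simp [birk]; linarith [Tail_nonneg hHc p]
  have hper : ∀ i, i < p → z (k + i) = z i := by
    intro i hi
    have h1 := hz' i hi
    rw [shft_iter_apply] at h1
    rw [Nat.add_comm k i, h1, hz i hi]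
  have hmod : ∀ j, j < k + p → z j = z (j % k) := by
    intro j
    induction j using Nat.strong_induction_on with
    | _ j ih =>
      intro hj
      rcases Nat.lt_or_ge j k with h | h
      · rw [Nat.mod_eq_of_lt h]
      · have hjk : j - k < p := by omega
        have h1 : z j = z (j - k) := by
          have := hper (j - k) hjk
          rw [show k + (j - k) = j by omega] at this
          exact this
        rw [h1, ih (j-k) (by omega) (by omega), Nat.mod_eq_sub_mod h]
  set w : Sig := fun j => z (j % k) with hwdef
  have hwper : shft^[k] w = w := by
    funext j
    rw [shft_iter_apply]
    show z ((j + k) % k) = z (j % k)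
    rw [Nat.add_mod_right]
  have hHw := Hbar_le_birk_avg hHc hk hwper
  have hcomp : ∀ i ∈ Finset.range k, H (shft^[i] w) - Var H (k + p - i) ≤ H (shft^[i] z) := by
    intro i hi
    have hik := Finset.mem_range.1 hi
    have hclose : nClose (k + p - i) (shft^[i] z) (shft^[i] w) := by
      intro j hj
      rw [shft_iter_apply, shft_iter_apply]
      show z (j + i) = z ((j + i) % k)
      exact hmod (j + i) (by omega)
    have := abs_sub_le_Var hHc hclose
    have h2 := abs_le.1 this
    linarith [h2.1]
  have hsum : ∑ i ∈ Finset.range k, (H (shft^[i] w) - Var H (k + p - i))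
      ≤ ∑ i ∈ Finset.range k, H (shft^[i] z) := Finset.sum_le_sum hcomp
  rw [Finset.sum_sub_distrib] at hsum
  have hvar : ∑ i ∈ Finset.range k, Var H (k + p - i) ≤ Tail H p := by
    have hre : ∑ i ∈ Finset.range k, Var H (k + p - i)
        = ∑ i ∈ Finset.range k, Var H (p + 1 + i) := by
      rw [← Finset.sum_range_reflect]
      refine Finset.sum_congr rfl fun i hi => ?_
      have := Finset.mem_range.1 hi
      congr 1
      omega
    rw [hre]
    have : ∑ i ∈ Finset.range k, Var H (p + 1 + i)
        = ∑ i ∈ Finset.range k, (fun m => Var H (p + 1 + m)) i := rfl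
    rw [this]
    exact (summable_tail hHv p).sum_le_tsum _ (fun i _ => Var_nonneg hHc _)
  have hbirk : birk H k z = ∑ i ∈ Finset.range k, H (shft^[i] z) - k * Hbar H := by
    unfold birk
    rw [Finset.sum_sub_distrib, Finset.sum_const, Finset.card_range, nsmul_eq_mul]
  rw [hbirk]
  linarith

lemma birk_ge_negC0 {H : Sig → ℝ} (hHc : Continuous H) (hHv : SummableVar H)
    (z : Sig) (k : ℕ) : -(Tail H 0) ≤ birk H k z :=
  birk_ge_neg_tail hHc hHv z 0 (fun _ h => absurd h (Nat.not_lt_zero _))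
    (fun _ h => absurd h (Nat.not_lt_zero _))


lemma birk_continuous {H : Sig → ℝ} (hHc : Continuous H) (k : ℕ) :
    Continuous (birk H k) := by
  unfold birk
  exact continuous_finset_sum _ fun i _ => (hHc.comp (shft_iter_cont i)).sub continuous_const

lemma integral_comp_shft {μ : Measure Sig} (hinv : μ.map shft = μ) {f : Sig → ℝ}
    (hf : Continuous f) : ∫ z, f (shft z) ∂μ = ∫ z, f z ∂μ := by
  conv_rhs => rw [← hinv]
  rw [integral_map shft_meas.aemeasurable hf.aestronglyMeasurable]

lemma integral_comp_iter {μ : Measure Sig} (hinv : μ.map shft = μ) {f : Sig → ℝ}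
    (hf : Continuous f) (i : ℕ) : ∫ z, f (shft^[i] z) ∂μ = ∫ z, f z ∂μ := by
  induction i with
  | zero => simp
  | succ i ih =>
    have : ∀ z : Sig, f (shft^[i+1] z) = (fun y => f (shft^[i] y)) (shft z) := by
      intro z; rw [Function.iterate_succ_apply]
    simp only [this]
    exact (integral_comp_shft hinv (hf.comp (shft_iter_cont i))).trans ih

lemma integral_birk_zero {H : Sig → ℝ} (hHc : Continuous H) {μ : Measure Sig}
    (hmin : IsMinimizing H μ) (K : ℕ) : ∫ z, birk H K z ∂μ = 0 := by
  haveI := hmin.1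
  unfold birk
  have hI1 : ∀ i : ℕ, Integrable (fun z : Sig => H (shft^[i] z)) μ := fun i =>
    integrable_of_continuous μ (hHc.comp (shft_iter_cont i))
  have hI : ∀ i : ℕ, Integrable (fun z => H (shft^[i] z) - Hbar H) μ := fun i =>
    (hI1 i).sub (integrable_const _)
  rw [integral_finset_sum _ fun i _ => hI i]
  have : ∀ i ∈ Finset.range K, ∫ z, (H (shft^[i] z) - Hbar H) ∂μ = 0 := by
    intro i _
    rw [integral_sub (hI1 i) (integrable_const _)]
    rw [integral_comp_iter hmin.2.1 hHc i, integral_eq_Hbar hHc hmin, integral_const]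
    simp
  rw [Finset.sum_congr rfl this, Finset.sum_const, smul_zero]

theorem atkinson {H : Sig → ℝ} (hHc : Continuous H) (hHv : SummableVar H)
    {μ : Measure Sig} (hmin : IsMinimizing H μ) {x : Sig} {p n : ℕ}
    (hA : μ (cylSet x p) ≠ 0) {ε : ℝ} (hε : 0 < ε) :
    ∃ k, n ≤ k ∧ ∃ z, nClose p z x ∧ nClose p (shft^[k] z) x ∧ birk H k z < ε := by
  by_contra hcon
  push_neg at hcon
  -- hcon : ∀ k, n ≤ k → ∀ z, nClose p z x → nClose p (shft^[k] z) x → ε ≤ birk H k z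
  haveI := hmin.1
  set A := cylSet x p with hAdef
  have hAmeas := measurableSet_cylSet x p
  have hcons : Conservative shft μ :=
    (MeasurePreserving.mk shft_meas hmin.2.1).conservative
  have hrec := hcons.ae_mem_imp_frequently_image_mem hAmeas.nullMeasurableSet
  set C0 := Tail H 0 with hC0def
  have hC0 : 0 ≤ C0 := Tail_nonneg hHc 0
  have haA : μ A ≠ ⊤ := measure_ne_top μ A
  set α : ℝ := (μ A / 2).toReal with hαdef
  have hα : 0 < α := by
    apply ENNReal.toReal_pos
    · simp only [ne_eq, ENNReal.div_eq_zero_iff]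
      push_neg
      exact ⟨hA, ENNReal.ofNat_ne_top⟩
    · exact (ENNReal.div_lt_top haA two_ne_zero).ne
  set R : ℝ := C0 + (C0 + 1) / α with hRdef
  have hR : 0 < R := by positivity
  set m₀ : ℕ := ⌈R / ε⌉₊ with hm₀def
  have hm₀ : R ≤ (m₀ : ℝ) * ε := by
    have h1 : R / ε ≤ (m₀ : ℝ) := Nat.le_ceil _
    calc R = (R / ε) * ε := by field_simp
      _ ≤ (m₀ : ℝ) * ε := mul_le_mul_of_nonneg_right h1 hε.le
  set E : ℕ → Set Sig := fun K => {z | ∃ j, j ≤ K ∧ R ≤ birk H j z} with hEdef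
  have hEmono : Monotone E := by
    intro a b hab z hz
    obtain ⟨j, hj, hr⟩ := hz
    exact ⟨j, hj.trans hab, hr⟩
  have hEmeas : ∀ K, MeasurableSet (E K) := by
    intro K
    have : E K = ⋃ j ∈ Finset.range (K+1), {z | R ≤ birk H j z} := by
      ext z
      simp only [hEdef, Set.mem_setOf_eq, Set.mem_iUnion, Finset.mem_range]
      constructor
      · rintro ⟨j, hj, hr⟩; exact ⟨j, by omega, hr⟩
      · rintro ⟨j, hj, hr⟩; exact ⟨j, by omega, hr⟩
    rw [this]
    refine MeasurableSet.biUnion (Finset.range (K+1)).countable_toSet fun j _ => ?_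
    exact (isClosed_le continuous_const (birk_continuous hHc j)).measurableSet
  -- claim: points of A returning infinitely often accumulate arbitrarily large Birkhoff sums
  have claim : ∀ z, nClose p z x → (∃ᶠ m in atTop, shft^[m] z ∈ A) →
      ∀ m : ℕ, ∃ t, nClose p (shft^[t] z) x ∧ (m : ℝ) * ε ≤ birk H t z := by
    intro z hz hfreq m
    induction m with
    | zero => exact ⟨0, by simpa using hz, by simp [birk]⟩
    | succ m ih =>
      obtain ⟨t, ht1, ht2⟩ := ih
      obtain ⟨M, hM, hMA⟩ := (frequently_atTop.1 hfreq) (t + n)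
      set k := M - t with hkdef
      have hk : n ≤ k := by omega
      have hMk : k + t = M := by omega
      have hstep : shft^[k] (shft^[t] z) ∈ A := by
        rw [← Function.iterate_add_apply, hMk]
        exact hMA
      have hbig : ε ≤ birk H k (shft^[t] z) := hcon k hk (shft^[t] z) ht1 hstep
      refine ⟨t + k, ?_, ?_⟩
      · have : shft^[t + k] z = shft^[k] (shft^[t] z) := by
          rw [← Function.iterate_add_apply, Nat.add_comm k t]
        rw [this]
        exact hstep
      · rw [birk_cocycle H t k z]
        push_cast
        linarith
  -- almost every point of A belongs to some E K
  have hae : ∀ᵐ z ∂μ, z ∈ A → z ∈ ⋃ K, E K := by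
    filter_upwards [hrec] with z hz hzA
    obtain ⟨t, _, hbig⟩ := claim z hzA (hz hzA) m₀
    exact Set.mem_iUnion.2 ⟨t, t, le_refl t, le_trans hm₀ hbig⟩
  have hsub : μ A ≤ μ (⋃ K, E K) := by
    have hnull : μ (A \ ⋃ K, E K) = 0 :=
      measure_eq_zero_iff_ae_notMem.2 (hae.mono fun z hz hzmem => hzmem.2 (hz hzmem.1))
    calc μ A ≤ μ ((⋃ K, E K) ∪ (A \ ⋃ K, E K)) := measure_mono fun z hz => by
          by_cases h : z ∈ ⋃ K, E K
          · exact Or.inl h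
          · exact Or.inr ⟨hz, h⟩
      _ ≤ μ (⋃ K, E K) + μ (A \ ⋃ K, E K) := measure_union_le _ _
      _ = μ (⋃ K, E K) := by rw [hnull, add_zero]
  have hhalf : μ A / 2 < μ (⋃ K, E K) :=
    lt_of_lt_of_le (ENNReal.half_lt_self hA haA) hsub
  have htends := tendsto_measure_iUnion_atTop (μ := μ) hEmono
  have hev : ∀ᶠ K in atTop, μ A / 2 < μ (E K) :=
    htends.eventually (eventually_gt_nhds hhalf)
  obtain ⟨K, hK⟩ := hev.exists
  -- integral contradiction
  have hint : Integrable (birk H K) μ := integrable_of_continuous μ (birk_continuous hHc K)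
  have hEKfin : μ (E K) ≠ ⊤ := measure_ne_top μ _
  have hlow1 : ∀ z ∈ E K, R - C0 ≤ birk H K z := by
    rintro z ⟨j, hj, hr⟩
    have : birk H K z = birk H j z + birk H (K - j) (shft^[j] z) := by
      rw [← birk_cocycle, Nat.add_sub_cancel' hj]
    rw [this]
    have := birk_ge_negC0 hHc hHv (shft^[j] z) (K - j)
    linarith
  have hlow2 : ∀ z ∈ (E K)ᶜ, -C0 ≤ birk H K z := fun z _ => birk_ge_negC0 hHc hHv z K
  have hb1 : (R - C0) * (μ (E K)).toReal ≤ ∫ z in E K, birk H K z ∂μ :=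
    by have := setIntegral_ge_of_const_le (hEmeas K) hEKfin hlow1 hint.integrableOn
       rwa [smul_eq_mul, mul_comm, measureReal_def] at this
  have hb2 : (-C0) * (μ (E K)ᶜ).toReal ≤ ∫ z in (E K)ᶜ, birk H K z ∂μ :=
    by have := setIntegral_ge_of_const_le (hEmeas K).compl (measure_ne_top μ _) hlow2 hint.integrableOn
       rwa [smul_eq_mul, mul_comm, measureReal_def] at this
  have hsplit : ∫ z in E K, birk H K z ∂μ + ∫ z in (E K)ᶜ, birk H K z ∂μ = ∫ z, birk H K z ∂μ :=
    integral_add_compl (hEmeas K) hint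
  have hzero : ∫ z, birk H K z ∂μ = 0 := integral_birk_zero hHc hmin K
  have hr1 : α ≤ (μ (E K)).toReal := ENNReal.toReal_mono hEKfin hK.le
  have hr2 : (μ (E K)ᶜ).toReal ≤ 1 := by
    have : μ (E K)ᶜ ≤ 1 := prob_le_one
    calc (μ (E K)ᶜ).toReal ≤ (1 : ENNReal).toReal := ENNReal.toReal_mono ENNReal.one_ne_top this
      _ = 1 := by simp
  have hRC : R - C0 = (C0 + 1) / α := by rw [hRdef]; ring
  have hfirst : C0 + 1 ≤ (R - C0) * (μ (E K)).toReal := by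
    rw [hRC]
    calc C0 + 1 = ((C0 + 1) / α) * α := by field_simp
      _ ≤ ((C0 + 1) / α) * (μ (E K)).toReal := by
          apply mul_le_mul_of_nonneg_left hr1
          positivity
  have hsecond : -C0 ≤ (-C0) * (μ (E K)ᶜ).toReal := by
    nlinarith [ENNReal.toReal_nonneg (a := μ (E K)ᶜ)]
  linarith [hb1, hb2, hsplit.symm ▸ hzero]

end S5

/-- the Mather set is contained in the zero set of the diagonal Peierls barrier. -/
theorem stmt_5 (H : Sig → ℝ) (hHc : Continuous H) (hHv : SummableVar H) :
    mather H ⊆ {x : Sig | peierls H x x = 0} := by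
  intro x hx
  obtain ⟨μ, hmin, hsupp⟩ := hx
  simp only [Set.mem_setOf_eq]
  unfold peierls
  apply le_antisymm
  · refine iSup_le fun p => iSup_le fun n => ?_
    by_contra hcon
    rw [not_le] at hcon
    obtain ⟨c, hc0, hcS⟩ := EReal.exists_between_coe_real hcon
    have hc0' : (0:ℝ) < c := by exact_mod_cast hc0
    have hA : μ (S5.cylSet x p) ≠ 0 :=
      hsupp _ (S5.isOpen_cylSet x p) (S5.mem_cylSet_self x p)
    obtain ⟨k, hk, z, hz1, hz2, hlt⟩ := S5.atkinson hHc hHv hmin hA hc0'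
    have hinf : SBar H p n x x ≤ ((birk H k z : ℝ) : EReal) :=
      sInf_le ⟨k, hk, z, hz1, hz2, rfl⟩
    have hlt2 : ((birk H k z : ℝ) : EReal) < (c : EReal) := by exact_mod_cast hlt
    exact absurd hcS (not_lt.2 (hinf.trans hlt2.le))
  · by_contra hcon
    rw [not_le] at hcon
    obtain ⟨c, hc1, hc2⟩ := EReal.exists_between_coe_real hcon
    have hc2' : (c:ℝ) < 0 := by exact_mod_cast hc2
    obtain ⟨p, hp⟩ := S5.exists_tail_lt hHc hHv (δ := -c) (by linarith)
    have hlow : ((-(S5.Tail H p) : ℝ) : EReal) ≤ SBar H p 0 x x := by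
      apply le_sInf
      rintro s ⟨k, hk, z, hz1, hz2, rfl⟩
      exact_mod_cast S5.birk_ge_neg_tail hHc hHv x p hz1 hz2
    have hle : SBar H p 0 x x ≤ ⨆ p : ℕ, ⨆ n : ℕ, SBar H p n x x :=
      le_trans (le_iSup (fun n => SBar H p n x x) 0)
        (le_iSup (fun p => ⨆ n : ℕ, SBar H p n x x) p)
    have hcc : (c : EReal) < ((-(S5.Tail H p) : ℝ) : EReal) := by
      exact_mod_cast (by linarith : c < -(S5.Tail H p))
    exact lt_irrefl _ (hc1.trans ((hcc.trans_le hlow).trans_le hle))
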